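/- Let u ≥ 2 and v ≥ 2 be integers. For every integer n with |n| ≥ 2 and every x in the free group F(a,b), the element x*(a*b)^n*x⁻¹ does not lie in the subgroup of F(a,b) generated by {a^u, a*b^v}. -/

import Mathlib

open Matrix Real

namespace ConjAux

abbrev SL2 := Matrix.SpecialLinearGroup (Fin 2) ℝ

noncomputable def Rot (θ : ℝ) : SL2 :=
  ⟨!![Real.cos θ, -Real.sin θ; Real.sin θ, Real.cos θ], by
    simp [Matrix.det_fin_two_of]
    nlinarith [Real.sin_sq_add_cos_sq θ]⟩

lemma Rot_mul (θ₁ θ₂ : ℝ) : Rot θ₁ * Rot θ₂ = Rot (θ₁ + θ₂) := by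
  ext i j
  rw [Matrix.SpecialLinearGroup.coe_mul]
  fin_cases i <;> fin_cases j <;>
    simp [Rot, Matrix.mul_apply, Fin.sum_univ_two, Real.cos_add, Real.sin_add] <;> ring

lemma Rot_pow (θ : ℝ) (k : ℕ) : Rot θ ^ (k + 1) = Rot ((k + 1 : ℕ) * θ) := by
  induction k with
  | zero => simp
  | succ k ih =>
      rw [pow_succ, ih, Rot_mul]
      congr 1
      push_cast
      ring

noncomputable def Amat (s : ℝ) : SL2 :=
  ⟨!![1, 3 / s; 0, 1], by simp [Matrix.det_fin_two_of]⟩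

def T : Subgroup SL2 where
  carrier := {g | (g : Matrix (Fin 2) (Fin 2) ℝ) 1 0 = 0 ∧
      (g : Matrix (Fin 2) (Fin 2) ℝ) 0 0 = (g : Matrix (Fin 2) (Fin 2) ℝ) 1 1}
  one_mem' := by simp
  mul_mem' := by
    rintro g h ⟨hg1, hg2⟩ ⟨hh1, hh2⟩
    constructor <;>
      simp [Matrix.mul_apply, Fin.sum_univ_two, hg1, hg2, hh1, hh2]
  inv_mem' := by
    rintro g ⟨hg1, hg2⟩
    constructor <;>
      simp [Matrix.SpecialLinearGroup.coe_inv, Matrix.adjugate_fin_two, hg1, hg2]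

lemma trace_le_two_of_mem_T (g : SL2) (hg : g ∈ T) :
    Matrix.trace (g : Matrix (Fin 2) (Fin 2) ℝ) ≤ 2 := by
  obtain ⟨h1, h2⟩ := hg
  have hdet : (g : Matrix (Fin 2) (Fin 2) ℝ).det = 1 := g.2
  rw [Matrix.det_fin_two] at hdet
  rw [Matrix.trace_fin_two]
  rw [h1, ← h2] at hdet
  nlinarith [sq_nonneg ((g : Matrix (Fin 2) (Fin 2) ℝ) 0 0 + 1), h2]

lemma sq_coe (g : SL2) :
    ((g * g : SL2) : Matrix (Fin 2) (Fin 2) ℝ) =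
      (Matrix.trace (g : Matrix (Fin 2) (Fin 2) ℝ)) • (g : Matrix (Fin 2) (Fin 2) ℝ) - 1 := by
  have hdet : (g : Matrix (Fin 2) (Fin 2) ℝ).det = 1 := g.2
  rw [Matrix.det_fin_two] at hdet
  ext i j
  fin_cases i <;> fin_cases j <;>
    simp [Matrix.mul_apply, Fin.sum_univ_two, Matrix.trace_fin_two, Matrix.one_apply] <;>
    nlinarith [hdet]

lemma trace_pow_succ_succ (g : SL2) (k : ℕ) :
    Matrix.trace ((g ^ (k + 2) : SL2) : Matrix (Fin 2) (Fin 2) ℝ) =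
      Matrix.trace (g : Matrix (Fin 2) (Fin 2) ℝ) *
        Matrix.trace ((g ^ (k + 1) : SL2) : Matrix (Fin 2) (Fin 2) ℝ) -
      Matrix.trace ((g ^ k : SL2) : Matrix (Fin 2) (Fin 2) ℝ) := by
  have h1 : (g ^ (k + 2) : SL2) = g ^ k * (g * g) := by rw [pow_succ, pow_succ, mul_assoc]
  rw [h1]
  rw [Matrix.SpecialLinearGroup.coe_mul, sq_coe, mul_sub, mul_one, Matrix.mul_smul]
  rw [Matrix.trace_sub, Matrix.trace_smul]
  have h2 : ((g ^ k : SL2) : Matrix (Fin 2) (Fin 2) ℝ) * (g : Matrix (Fin 2) (Fin 2) ℝ) =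
      ((g ^ (k + 1) : SL2) : Matrix (Fin 2) (Fin 2) ℝ) := by
    rw [pow_succ, Matrix.SpecialLinearGroup.coe_mul]
  rw [h2]
  simp [mul_comm]

lemma trace_pow_lower (g : SL2) (h3 : 3 ≤ Matrix.trace (g : Matrix (Fin 2) (Fin 2) ℝ)) :
    ∀ k : ℕ,
      Matrix.trace ((g ^ k : SL2) : Matrix (Fin 2) (Fin 2) ℝ) + 1 ≤
        Matrix.trace ((g ^ (k + 1) : SL2) : Matrix (Fin 2) (Fin 2) ℝ) ∧
      2 ≤ Matrix.trace ((g ^ k : SL2) : Matrix (Fin 2) (Fin 2) ℝ) := by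
  intro k
  induction k with
  | zero =>
      constructor
      · simp only [pow_zero, pow_one, Matrix.SpecialLinearGroup.coe_one, Matrix.trace_one]
        norm_num
        linarith
      · simp
  | succ k ih =>
      obtain ⟨ih1, ih2⟩ := ih
      constructor
      · rw [trace_pow_succ_succ]
        nlinarith
      · linarith

lemma three_le_trace_pow (g : SL2) (h3 : 3 ≤ Matrix.trace (g : Matrix (Fin 2) (Fin 2) ℝ))
    (k : ℕ) (hk : k ≠ 0) : 3 ≤ Matrix.trace ((g ^ k : SL2) : Matrix (Fin 2) (Fin 2) ℝ) := by
  obtain ⟨m, rfl⟩ : ∃ m, k = m + 1 := ⟨k - 1, by omega⟩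
  obtain ⟨h1, h2⟩ := trace_pow_lower g h3 m
  linarith

lemma trace_inv (g : SL2) :
    Matrix.trace ((g⁻¹ : SL2) : Matrix (Fin 2) (Fin 2) ℝ) =
      Matrix.trace (g : Matrix (Fin 2) (Fin 2) ℝ) := by
  rw [Matrix.SpecialLinearGroup.coe_inv, Matrix.adjugate_fin_two]
  simp [Matrix.trace_fin_two, add_comm]

lemma three_le_trace_zpow (g : SL2) (h3 : 3 ≤ Matrix.trace (g : Matrix (Fin 2) (Fin 2) ℝ))
    (n : ℤ) (hn : n ≠ 0) : 3 ≤ Matrix.trace ((g ^ n : SL2) : Matrix (Fin 2) (Fin 2) ℝ) := by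
  rcases lt_or_gt_of_ne hn with h | h
  · have : g ^ n = (g ^ (-n).toNat)⁻¹ := by
      rw [← zpow_natCast, Int.toNat_of_nonneg (by omega), _root_.zpow_neg, inv_inv]
    rw [this, trace_inv]
    exact three_le_trace_pow g h3 _ (by omega)
  · have : g ^ n = g ^ n.toNat := by
      rw [← zpow_natCast, Int.toNat_of_nonneg (by omega)]
    rw [this]
    exact three_le_trace_pow g h3 _ (by omega)

lemma trace_conj (g h : SL2) :
    Matrix.trace ((g * h * g⁻¹ : SL2) : Matrix (Fin 2) (Fin 2) ℝ) =
      Matrix.trace (h : Matrix (Fin 2) (Fin 2) ℝ) := by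
  rw [Matrix.SpecialLinearGroup.coe_mul, Matrix.SpecialLinearGroup.coe_mul]
  rw [Matrix.trace_mul_comm]
  rw [← Matrix.mul_assoc, ← Matrix.SpecialLinearGroup.coe_mul, inv_mul_cancel]
  simp

end ConjAux

noncomputable def a : FreeGroup Bool := FreeGroup.of false
noncomputable def b : FreeGroup Bool := FreeGroup.of true

/-- For `u, v ≥ 2` and `|n| ≥ 2`, no conjugate `x * (a*b)^n * x⁻¹` lies in the
subgroup of F(a,b) generated by `{a^u, a*b^v}`. -/
theorem conj_pow_not_mem (u v : ℤ) (hu : 2 ≤ u) (hv : 2 ≤ v)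
    (n : ℤ) (hn : 2 ≤ |n|) (x : FreeGroup Bool) :
    x * (a * b) ^ n * x⁻¹ ∉ Subgroup.closure {a ^ u, a * b ^ v} := by
  intro hmem
  set θ : ℝ := Real.pi / (v : ℝ) with hθdef
  have hv2 : (2 : ℝ) ≤ (v : ℝ) := by exact_mod_cast hv
  have hθpos : 0 < θ := div_pos Real.pi_pos (by linarith)
  have hθle : θ ≤ Real.pi / 2 := by
    apply div_le_div_of_nonneg_left Real.pi_pos.le (by norm_num) hv2
  have hs : 0 < Real.sin θ :=
    Real.sin_pos_of_pos_of_lt_pi hθpos (lt_of_le_of_lt hθle (by linarith [Real.pi_pos]))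
  have hc : 0 ≤ Real.cos θ :=
    Real.cos_nonneg_of_mem_Icc ⟨by linarith, hθle⟩
  set φ : FreeGroup Bool →* ConjAux.SL2 :=
    FreeGroup.lift (fun t : Bool => if t then ConjAux.Rot θ else ConjAux.Amat (Real.sin θ))
    with hφdef
  have hφa : φ a = ConjAux.Amat (Real.sin θ) := by simp [hφdef, a]
  have hφb : φ b = ConjAux.Rot θ := by simp [hφdef, b]
  -- rotation to the power v is rotation by π
  have hRv : ConjAux.Rot θ ^ v = ConjAux.Rot Real.pi := by
    obtain ⟨k, hk⟩ : ∃ k : ℕ, v = ((k : ℤ) + 1) := ⟨(v - 1).toNat, by omega⟩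
    have hcast : ((k : ℝ) + 1) = (v : ℝ) := by rw [hk]; push_cast; ring
    have : ConjAux.Rot θ ^ v = ConjAux.Rot θ ^ ((k + 1 : ℕ) : ℤ) := by
      rw [hk]; norm_num
    rw [this, zpow_natCast, ConjAux.Rot_pow]
    congr 1
    push_cast
    rw [hcast, hθdef]
    field_simp
  -- image of the subgroup is inside T
  have hAT : ConjAux.Amat (Real.sin θ) ∈ ConjAux.T := by
    constructor <;> simp [ConjAux.Amat]
  have hABvT : ConjAux.Amat (Real.sin θ) * ConjAux.Rot Real.pi ∈ ConjAux.T := by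
    constructor <;> rw [Matrix.SpecialLinearGroup.coe_mul] <;>
      simp [ConjAux.Amat, ConjAux.Rot, Matrix.mul_apply, Fin.sum_univ_two]
  have hTmem : φ (x * (a * b) ^ n * x⁻¹) ∈ ConjAux.T := by
    have h1 : φ (x * (a * b) ^ n * x⁻¹) ∈
        (Subgroup.closure {a ^ u, a * b ^ v}).map φ :=
      Subgroup.mem_map_of_mem φ hmem
    rw [MonoidHom.map_closure] at h1
    have h2 : (φ '' {a ^ u, a * b ^ v}) ⊆ (ConjAux.T : Set ConjAux.SL2) := by
      rintro y ⟨z, hz, rfl⟩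
      rcases hz with rfl | rfl
      · rw [map_zpow, hφa]
        exact Subgroup.zpow_mem _ hAT u
      · rw [_root_.map_mul, map_zpow, hφa, hφb, hRv]
        exact hABvT
    exact (Subgroup.closure_le _).2 h2 h1
  -- trace estimate
  have htr3 : 3 ≤ Matrix.trace
      (((ConjAux.Amat (Real.sin θ) * ConjAux.Rot θ) : ConjAux.SL2) :
        Matrix (Fin 2) (Fin 2) ℝ) := by
    have : (3 : ℝ) / Real.sin θ * Real.sin θ = 3 := div_mul_cancel₀ 3 hs.ne'
    rw [Matrix.SpecialLinearGroup.coe_mul]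
    simp [ConjAux.Amat, ConjAux.Rot, Matrix.trace_fin_two, Matrix.mul_apply,
      Fin.sum_univ_two, this]
    linarith
  have hn0 : n ≠ 0 := by intro h; rw [h] at hn; simp at hn
  have htrn : 3 ≤ Matrix.trace
      ((((ConjAux.Amat (Real.sin θ) * ConjAux.Rot θ) ^ n : ConjAux.SL2)) :
        Matrix (Fin 2) (Fin 2) ℝ) :=
    ConjAux.three_le_trace_zpow _ htr3 n hn0
  have heq : φ (x * (a * b) ^ n * x⁻¹) =
      φ x * (ConjAux.Amat (Real.sin θ) * ConjAux.Rot θ) ^ n * (φ x)⁻¹ := by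
    rw [_root_.map_mul, _root_.map_mul, map_inv, map_zpow, _root_.map_mul, hφa, hφb]
  have htr := ConjAux.trace_conj (φ x) ((ConjAux.Amat (Real.sin θ) * ConjAux.Rot θ) ^ n)
  have hle := ConjAux.trace_le_two_of_mem_T _ hTmem
  rw [heq, htr] at hle
  linarith
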